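/- Let n ≥ 1 and let G = K_{n,n} be the complete bipartite graph. Form G_ω by listing the n² edges of G in a uniformly random order and taking the shortest initial segment in which every vertex has degree at least 1. Then the expected number of perfect matchings of G contained in G_ω equals n!·(2/binom(2n−1, n) − 1/binom(3n−2, n)). -/

import Mathlib

open Finset

/-- The degree of a vertex `v` in the graph whose edge set is the finite set `s`
of edges (elements of `Sym2 V`). -/
def degIn {V : Type*} [DecidableEq V] (s : Finset (Sym2 V)) (v : V) : ℕ :=
  (s.filter (fun e => v ∈ e)).card

/-- Given an ordering `ω` of a finite set `s` of edges, the set consisting of the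
first `i` edges `e_{ω(1)}, …, e_{ω(i)}`. -/
def prefixEdges {V : Type*} [DecidableEq V] {s : Finset (Sym2 V)}
    (ω : Fin s.card ≃ {e : Sym2 V // e ∈ s}) (i : ℕ) : Finset (Sym2 V) :=
  (Finset.univ.filter (fun j : Fin s.card => (j : ℕ) < i)).image (fun j => (ω j : Sym2 V))

/-- `k(ω)`: the least `i` such that every vertex has degree at least `δ` in the graph
formed by the first `i` edges of the ordering `ω`. -/
noncomputable def stopIndex {V : Type*} [Fintype V] [DecidableEq V] (δ : ℕ)
    {s : Finset (Sym2 V)} (ω : Fin s.card ≃ {e : Sym2 V // e ∈ s}) : ℕ :=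
  sInf {i | ∀ v : V, δ ≤ degIn (prefixEdges ω i) v}

/-- The edge set of `G_ω`, i.e. the first `k(ω)` edges of the ordering `ω`. -/
noncomputable def finalEdges {V : Type*} [Fintype V] [DecidableEq V] (δ : ℕ)
    {s : Finset (Sym2 V)} (ω : Fin s.card ≃ {e : Sym2 V // e ∈ s}) : Finset (Sym2 V) :=
  prefixEdges ω (stopIndex δ ω)

/-- A graph is `δ`-regular: every vertex has exactly `δ` neighbours. -/
def regOfDegree {V : Type*} (J : SimpleGraph V) (δ : ℕ) : Prop :=
  ∀ v : V, (J.neighborSet v).ncard = δ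

instance (n : ℕ) : DecidableRel (completeBipartiteGraph (Fin n) (Fin n)).Adj := fun a b => by
  unfold completeBipartiteGraph
  dsimp only
  infer_instance

section Count
variable {α : Type*} [Fintype α] [DecidableEq α]

/-- The position function built from the parametrization data. -/
def posFun (m : ℕ) (x : α) (S T : Finset α) (K : Finset (Fin m))
    (hK : K.card = S.card + 1 + T.card) (hKc : Kᶜ.card = m - (S.card + 1 + T.card))
    (eS : Fin S.card ≃ {a // a ∈ S}) (eT : Fin T.card ≃ {a // a ∈ T})
    (eC : Fin (m - (S.card + 1 + T.card)) ≃ {a : α // a ∈ (insert x (S ∪ T))ᶜ})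
    (a : α) : Fin m :=
  if h : a ∈ S then
    (K.orderIsoOfFin hK ⟨(eS.symm ⟨a, h⟩ : ℕ), lt_of_lt_of_le (Fin.is_lt _) (by omega)⟩ : Fin m)
  else if h2 : a = x then (K.orderIsoOfFin hK ⟨S.card, by omega⟩ : Fin m)
  else if h3 : a ∈ T then
    (K.orderIsoOfFin hK ⟨S.card + 1 + (eT.symm ⟨a, h3⟩ : ℕ),
      Nat.add_lt_add_left (Fin.is_lt _) _⟩ : Fin m)
  else (Kᶜ.orderIsoOfFin hKc (eC.symm ⟨a, by simp [Finset.mem_insert, Finset.mem_union, h, h2, h3]⟩) : Fin m)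

lemma posFun_injective (m : ℕ) (x : α) (S T : Finset α) (K : Finset (Fin m))
    (hK : K.card = S.card + 1 + T.card) (hKc : Kᶜ.card = m - (S.card + 1 + T.card))
    (eS : Fin S.card ≃ {a // a ∈ S}) (eT : Fin T.card ≃ {a // a ∈ T})
    (eC : Fin (m - (S.card + 1 + T.card)) ≃ {a : α // a ∈ (insert x (S ∪ T))ᶜ}) :
    Function.Injective (posFun m x S T K hK hKc eS eT eC) := by
  classical
  intro a b hab
  unfold posFun at hab
  have hioK : ∀ i j, ((K.orderIsoOfFin hK i : {j // j ∈ K}) : Fin m) =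
      ((K.orderIsoOfFin hK j : {j // j ∈ K}) : Fin m) → i = j := fun i j hij =>
    (K.orderIsoOfFin hK).injective (Subtype.ext hij)
  have hioKc : ∀ i j, ((Kᶜ.orderIsoOfFin hKc i : {j // j ∈ Kᶜ}) : Fin m) =
      ((Kᶜ.orderIsoOfFin hKc j : {j // j ∈ Kᶜ}) : Fin m) → i = j := fun i j hij =>
    (Kᶜ.orderIsoOfFin hKc).injective (Subtype.ext hij)
  have hKKc : ∀ i j, ((K.orderIsoOfFin hK i : {j // j ∈ K}) : Fin m) ≠
      ((Kᶜ.orderIsoOfFin hKc j : {j // j ∈ Kᶜ}) : Fin m) := by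
    intro i j h
    have h1 : ((K.orderIsoOfFin hK i : {j // j ∈ K}) : Fin m) ∈ K := (K.orderIsoOfFin hK i).2
    rw [h] at h1
    exact (Finset.mem_compl.mp (Kᶜ.orderIsoOfFin hKc j).2) h1
  by_cases ha : a ∈ S <;> by_cases hb : b ∈ S
  · rw [dif_pos ha, dif_pos hb] at hab
    have h2 := congrArg Fin.val (hioK _ _ hab)
    simp only [] at h2
    exact congrArg Subtype.val (eS.symm.injective (Fin.val_injective h2))
  · rw [dif_pos ha] at hab
    by_cases hb2 : b = x
    · rw [dif_neg hb, dif_pos hb2] at hab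
      have h2 := congrArg Fin.val (hioK _ _ hab)
      have := (eS.symm ⟨a, ha⟩).isLt
      simp only [] at h2
      omega
    · by_cases hb3 : b ∈ T
      · rw [dif_neg hb, dif_neg hb2, dif_pos hb3] at hab
        have h2 := congrArg Fin.val (hioK _ _ hab)
        have := (eS.symm ⟨a, ha⟩).isLt
        simp only [] at h2
        omega
      · rw [dif_neg hb, dif_neg hb2, dif_neg hb3] at hab
        exact absurd hab (hKKc _ _)
  · rw [dif_pos hb] at hab
    by_cases ha2 : a = x
    · rw [dif_neg ha, dif_pos ha2] at hab
      have h2 := congrArg Fin.val (hioK _ _ hab)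
      have := (eS.symm ⟨b, hb⟩).isLt
      simp only [] at h2
      omega
    · by_cases ha3 : a ∈ T
      · rw [dif_neg ha, dif_neg ha2, dif_pos ha3] at hab
        have h2 := congrArg Fin.val (hioK _ _ hab)
        have := (eS.symm ⟨b, hb⟩).isLt
        simp only [] at h2
        omega
      · rw [dif_neg ha, dif_neg ha2, dif_neg ha3] at hab
        exact absurd hab.symm (hKKc _ _)
  · by_cases ha2 : a = x <;> by_cases hb2 : b = x
    · rw [ha2, hb2]
    · rw [dif_neg ha, dif_pos ha2, dif_neg hb, dif_neg hb2] at hab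
      by_cases hb3 : b ∈ T
      · rw [dif_pos hb3] at hab
        have h2 := congrArg Fin.val (hioK _ _ hab)
        simp only [] at h2
        omega
      · rw [dif_neg hb3] at hab
        exact absurd hab (hKKc _ _)
    · rw [dif_neg ha, dif_neg ha2, dif_neg hb, dif_pos hb2] at hab
      by_cases ha3 : a ∈ T
      · rw [dif_pos ha3] at hab
        have h2 := congrArg Fin.val (hioK _ _ hab)
        simp only [] at h2
        omega
      · rw [dif_neg ha3] at hab
        exact absurd hab.symm (hKKc _ _)
    · by_cases ha3 : a ∈ T <;> by_cases hb3 : b ∈ T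
      · rw [dif_neg ha, dif_neg ha2, dif_pos ha3, dif_neg hb, dif_neg hb2, dif_pos hb3] at hab
        have h2 := congrArg Fin.val (hioK _ _ hab)
        simp only [] at h2
        have h3 : (eT.symm ⟨a, ha3⟩ : ℕ) = (eT.symm ⟨b, hb3⟩ : ℕ) := by omega
        exact congrArg Subtype.val (eT.symm.injective (Fin.val_injective h3))
      · rw [dif_neg ha, dif_neg ha2, dif_pos ha3, dif_neg hb, dif_neg hb2, dif_neg hb3] at hab
        exact absurd hab (hKKc _ _)
      · rw [dif_neg ha, dif_neg ha2, dif_neg ha3, dif_neg hb, dif_neg hb2, dif_pos hb3] at hab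
        exact absurd hab.symm (hKKc _ _)
      · rw [dif_neg ha, dif_neg ha2, dif_neg ha3, dif_neg hb, dif_neg hb2, dif_neg hb3] at hab
        exact congrArg Subtype.val (eC.symm.injective (hioKc _ _ hab))
end Count

section Count2
variable {α : Type*} [Fintype α] [DecidableEq α]

lemma posFun_mem_K (m : ℕ) (x : α) (S T : Finset α) (K : Finset (Fin m))
    (hK : K.card = S.card + 1 + T.card) (hKc : Kᶜ.card = m - (S.card + 1 + T.card))
    (eS : Fin S.card ≃ {a // a ∈ S}) (eT : Fin T.card ≃ {a // a ∈ T})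
    (eC : Fin (m - (S.card + 1 + T.card)) ≃ {a : α // a ∈ (insert x (S ∪ T))ᶜ})
    {a : α} (ha : a ∈ insert x (S ∪ T)) :
    posFun m x S T K hK hKc eS eT eC a ∈ K := by
  unfold posFun
  rcases Finset.mem_insert.mp ha with h | h
  · by_cases h1 : a ∈ S
    · rw [dif_pos h1]; exact (K.orderIsoOfFin hK _).2
    · rw [dif_neg h1, dif_pos h]; exact (K.orderIsoOfFin hK _).2
  · rcases Finset.mem_union.mp h with h1 | h1
    · rw [dif_pos h1]; exact (K.orderIsoOfFin hK _).2
    · by_cases h2 : a ∈ S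
      · rw [dif_pos h2]; exact (K.orderIsoOfFin hK _).2
      · by_cases h3 : a = x
        · rw [dif_neg h2, dif_pos h3]; exact (K.orderIsoOfFin hK _).2
        · rw [dif_neg h2, dif_neg h3, dif_pos h1]; exact (K.orderIsoOfFin hK _).2
end Count2

section Count3
variable {α : Type*} [Fintype α] [DecidableEq α]

lemma cardAK (m : ℕ) (hm : Fintype.card α = m) (x : α) (S T : Finset α)
    (hxS : x ∉ S) (hxT : x ∉ T) (hST : Disjoint S T) (K : Finset (Fin m))
    (hK : K.card = S.card + 1 + T.card) :
    (univ.filter (fun σ : Fin m ≃ α =>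
      ((insert x (S ∪ T)).image (fun d => σ.symm d) = K) ∧
      (∀ f ∈ S, (σ.symm f : ℕ) < (σ.symm x : ℕ)) ∧
      (∀ g ∈ T, (σ.symm x : ℕ) < (σ.symm g : ℕ)))).card
    = S.card.factorial * T.card.factorial * (m - (S.card + 1 + T.card)).factorial := by
  classical
  set D := insert x (S ∪ T) with hDdef
  have hxST : x ∉ S ∪ T := by simp [hxS, hxT]
  have hD : D.card = S.card + 1 + T.card := by
    rw [hDdef, Finset.card_insert_of_notMem hxST, Finset.card_union_of_disjoint hST]
    omega
  have hKc : Kᶜ.card = m - (S.card + 1 + T.card) := by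
    rw [Finset.card_compl, hK, Fintype.card_fin]
  have hDc : ((Dᶜ : Finset α)).card = m - (S.card + 1 + T.card) := by
    rw [Finset.card_compl, hD, hm]
  -- the parametrizing type
  set B := (Fin S.card ≃ {a // a ∈ S}) × (Fin T.card ≃ {a // a ∈ T}) ×
    (Fin (m - (S.card + 1 + T.card)) ≃ {a : α // a ∈ (Dᶜ : Finset α)}) with hBdef
  have hcard : Fintype.card α = Fintype.card (Fin m) := by simp [hm]
  -- the map from B into equivalences
  have hbij : ∀ b : B, Function.Bijective (posFun m x S T K hK hKc b.1 b.2.1 b.2.2) := by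
    intro b
    exact (Fintype.bijective_iff_injective_and_card _).mpr
      ⟨posFun_injective m x S T K hK hKc b.1 b.2.1 b.2.2, hcard⟩
  set Φ : B → (Fin m ≃ α) := fun b => (Equiv.ofBijective _ (hbij b)).symm with hΦdef
  have hΦsymm : ∀ b : B, ∀ a : α, (Φ b).symm a = posFun m x S T K hK hKc b.1 b.2.1 b.2.2 a :=
    fun b a => rfl
  have hlt : ∀ i j : Fin (S.card + 1 + T.card), i < j →
      ((K.orderIsoOfFin hK i : {j // j ∈ K}) : Fin m) < ((K.orderIsoOfFin hK j : {j // j ∈ K}) : Fin m) := by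
    intro i j hij
    exact Subtype.coe_lt_coe.mpr ((K.orderIsoOfFin hK).strictMono hij)
  have hmem : ∀ b : B, Φ b ∈ univ.filter (fun σ : Fin m ≃ α =>
      ((insert x (S ∪ T)).image (fun d => σ.symm d) = K) ∧
      (∀ f ∈ S, (σ.symm f : ℕ) < (σ.symm x : ℕ)) ∧
      (∀ g ∈ T, (σ.symm x : ℕ) < (σ.symm g : ℕ)))  := by
    intro b
    rw [Finset.mem_filter]
    refine ⟨Finset.mem_univ _, ?_, ?_, ?_⟩
    · apply Finset.eq_of_subset_of_card_le
      · intro j hj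
        obtain ⟨d, hd, rfl⟩ := Finset.mem_image.mp hj
        rw [hΦsymm]
        exact posFun_mem_K m x S T K hK hKc b.1 b.2.1 b.2.2 hd
      · rw [hK, Finset.card_image_of_injective _ (Φ b).symm.injective, hD]
    · intro f hf
      rw [hΦsymm, hΦsymm]
      unfold posFun
      rw [dif_pos hf, dif_neg hxS, dif_pos rfl]
      exact Fin.lt_def.mp (hlt _ _ (by
        exact Fin.mk_lt_mk.mpr (Fin.is_lt _)))
    · intro g hg
      rw [hΦsymm, hΦsymm]
      unfold posFun
      rw [dif_neg hxS, dif_pos rfl,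
        dif_neg (fun h => Finset.disjoint_left.mp hST h hg),
        dif_neg (fun (h : g = x) => hxT (h ▸ hg)), dif_pos hg]
      exact Fin.lt_def.mp (hlt _ _ (Fin.mk_lt_mk.mpr (by omega)))
  have hΦinj : Function.Injective Φ := by
    intro b b' hbb
    have hpos : ∀ a, posFun m x S T K hK hKc b.1 b.2.1 b.2.2 a
        = posFun m x S T K hK hKc b'.1 b'.2.1 b'.2.2 a := by
      intro a
      rw [← hΦsymm, ← hΦsymm, hbb]
    obtain ⟨eS, eT, eC⟩ := b
    obtain ⟨eS', eT', eC'⟩ := b'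
    have hioK : ∀ i j, ((K.orderIsoOfFin hK i : {j // j ∈ K}) : Fin m) =
        ((K.orderIsoOfFin hK j : {j // j ∈ K}) : Fin m) → i = j := fun i j hij =>
      (K.orderIsoOfFin hK).injective (Subtype.ext hij)
    have c1 : eS = eS' := by
      have h1 : ∀ f : {a // a ∈ S}, eS.symm f = eS'.symm f := by
        intro f
        have h0 := hpos (f : α)
        unfold posFun at h0
        rw [dif_pos f.2, dif_pos f.2] at h0
        have h2 := congrArg Fin.val (hioK _ _ h0)
        exact Fin.val_injective h2
      have h2 : eS.symm = eS'.symm := Equiv.ext h1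
      simpa using congrArg Equiv.symm h2
    have c2 : eT = eT' := by
      have h1 : ∀ g : {a // a ∈ T}, eT.symm g = eT'.symm g := by
        intro g
        have hgS : (g : α) ∉ S := fun h => Finset.disjoint_left.mp hST h g.2
        have hgx : (g : α) ≠ x := fun h => hxT (h ▸ g.2)
        have h0 := hpos (g : α)
        unfold posFun at h0
        rw [dif_neg hgS, dif_neg hgS, dif_neg hgx, dif_neg hgx, dif_pos g.2, dif_pos g.2] at h0
        have h2 := congrArg Fin.val (hioK _ _ h0)
        have h2' : S.card + 1 + (eT.symm g : ℕ)
            = S.card + 1 + (eT'.symm g : ℕ) := h2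
        exact Fin.val_injective (by omega)
      have h2 : eT.symm = eT'.symm := Equiv.ext h1
      simpa using congrArg Equiv.symm h2
    have c3 : eC = eC' := by
      have h1 : ∀ a : {a : α // a ∈ (Dᶜ : Finset α)}, eC.symm a = eC'.symm a := by
        intro a
        have ha := Finset.mem_compl.mp a.2
        have haS : (a : α) ∉ S := fun h => ha (Finset.mem_insert_of_mem (Finset.mem_union_left _ h))
        have hax : (a : α) ≠ x := fun h => ha (h ▸ Finset.mem_insert_self _ _)
        have haT : (a : α) ∉ T := fun h => ha (Finset.mem_insert_of_mem (Finset.mem_union_right _ h))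
        have h0 := hpos (a : α)
        unfold posFun at h0
        rw [dif_neg haS, dif_neg haS, dif_neg hax, dif_neg hax, dif_neg haT, dif_neg haT] at h0
        exact (Kᶜ.orderIsoOfFin hKc).injective (Subtype.ext h0)
      have h2 : eC.symm = eC'.symm := Equiv.ext h1
      simpa using congrArg Equiv.symm h2
    rw [c1, c2, c3]
  have hsurj : ∀ σ : Fin m ≃ α, σ ∈ (univ.filter (fun σ : Fin m ≃ α =>
      ((insert x (S ∪ T)).image (fun d => σ.symm d) = K) ∧
      (∀ f ∈ S, (σ.symm f : ℕ) < (σ.symm x : ℕ)) ∧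
      (∀ g ∈ T, (σ.symm x : ℕ) < (σ.symm g : ℕ)))) → ∃ b : B, Φ b = σ := by
    intro σ hσ
    rw [Finset.mem_filter] at hσ
    obtain ⟨-, himg, hSlt, hTlt⟩ := hσ
    have hmemKD : ∀ d ∈ D, σ.symm d ∈ K := fun d hd => himg ▸ Finset.mem_image_of_mem _ hd
    have hxK : σ.symm x ∈ K := hmemKD x (Finset.mem_insert_self _ _)
    set oio := K.orderIsoOfFin hK with hoio
    set ν : Fin (S.card + 1 + T.card) := oio.symm ⟨σ.symm x, hxK⟩ with hν
    have hfilt1 : K.filter (fun j => j < σ.symm x) = S.image (fun d => σ.symm d) := by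
      ext j
      simp only [Finset.mem_filter, Finset.mem_image]
      constructor
      · rintro ⟨hjK, hjlt⟩
        rw [← himg] at hjK
        obtain ⟨d, hd, rfl⟩ := Finset.mem_image.mp hjK
        rcases Finset.mem_insert.mp hd with rfl | hd2
        · exact absurd hjlt (lt_irrefl _)
        · rcases Finset.mem_union.mp hd2 with h | h
          · exact ⟨d, h, rfl⟩
          · exact absurd hjlt (not_lt.mpr (le_of_lt (Fin.lt_def.mpr (hTlt d h))))
      · rintro ⟨f, hf, rfl⟩
        exact ⟨hmemKD f (Finset.mem_insert_of_mem (Finset.mem_union_left _ hf)),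
          Fin.lt_def.mpr (hSlt f hf)⟩
    have hfilt2 : K.filter (fun j => j < σ.symm x) =
        (Finset.Iio ν).image (fun i => ((oio i : {j // j ∈ K}) : Fin m)) := by
      ext j
      simp only [Finset.mem_filter, Finset.mem_image, Finset.mem_Iio]
      constructor
      · rintro ⟨hjK, hjlt⟩
        refine ⟨oio.symm ⟨j, hjK⟩, ?_, ?_⟩
        · rw [hν]
          exact oio.symm.strictMono (Subtype.mk_lt_mk.mpr hjlt)
        · rw [OrderIso.apply_symm_apply]
      · rintro ⟨i, hi, rfl⟩
        refine ⟨(oio i).2, ?_⟩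
        have h3 : oio i < oio ν := oio.strictMono hi
        rw [hν, OrderIso.apply_symm_apply] at h3
        exact Subtype.coe_lt_coe.mpr h3
    have hνval : (ν : ℕ) = S.card := by
      have h1 : (K.filter (fun j => j < σ.symm x)).card = S.card := by
        rw [hfilt1, Finset.card_image_of_injective _ σ.symm.injective]
      have h2 : (K.filter (fun j => j < σ.symm x)).card = (ν : ℕ) := by
        rw [hfilt2, Finset.card_image_of_injective _
          (fun i j hij => oio.injective (Subtype.ext hij)), Fin.card_Iio]
      omega
    have hSK : ∀ f : {a // a ∈ S}, σ.symm ↑f ∈ K := fun f =>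
      hmemKD _ (Finset.mem_insert_of_mem (Finset.mem_union_left _ f.2))
    have hTK : ∀ g : {a // a ∈ T}, σ.symm ↑g ∈ K := fun g =>
      hmemKD _ (Finset.mem_insert_of_mem (Finset.mem_union_right _ g.2))
    have hrankS : ∀ f : {a // a ∈ S}, (oio.symm ⟨σ.symm ↑f, hSK f⟩ : ℕ) < S.card := by
      intro f
      have h5 : (oio.symm ⟨σ.symm ↑f, hSK f⟩ : ℕ) < (ν : ℕ) :=
        Fin.lt_def.mp (oio.symm.strictMono (Subtype.mk_lt_mk.mpr (Fin.lt_def.mpr (hSlt f f.2))))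
      omega
    have hrankT : ∀ g : {a // a ∈ T}, S.card < (oio.symm ⟨σ.symm ↑g, hTK g⟩ : ℕ) := by
      intro g
      have h5 : (ν : ℕ) < (oio.symm ⟨σ.symm ↑g, hTK g⟩ : ℕ) :=
        Fin.lt_def.mp (oio.symm.strictMono (Subtype.mk_lt_mk.mpr (Fin.lt_def.mpr (hTlt g g.2))))
      omega
    have hCK : ∀ a : {a : α // a ∈ (Dᶜ : Finset α)}, σ.symm ↑a ∈ Kᶜ := by
      intro a
      rw [Finset.mem_compl]
      intro h
      rw [← himg] at h
      obtain ⟨d, hd, hde⟩ := Finset.mem_image.mp h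
      exact Finset.mem_compl.mp a.2 ((σ.symm.injective hde) ▸ hd)
    set oioc := Kᶜ.orderIsoOfFin hKc with hoioc
    have hbijS : Function.Bijective (fun f : {a // a ∈ S} =>
        (⟨(oio.symm ⟨σ.symm ↑f, hSK f⟩ : ℕ), hrankS f⟩ : Fin S.card)) := by
      rw [Fintype.bijective_iff_injective_and_card]
      refine ⟨?_, by simp⟩
      intro f f' hff
      simp only [Fin.mk.injEq] at hff
      have h2 := oio.symm.injective (Fin.val_injective hff)
      have h3 : σ.symm ↑f = σ.symm ↑f' := congrArg Subtype.val h2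
      exact Subtype.ext (σ.symm.injective h3)
    have hbijT : Function.Bijective (fun g : {a // a ∈ T} =>
        (⟨(oio.symm ⟨σ.symm ↑g, hTK g⟩ : ℕ) - (S.card + 1),
          by have := (oio.symm ⟨σ.symm ↑g, hTK g⟩).isLt; have := hrankT g; omega⟩ : Fin T.card)) := by
      rw [Fintype.bijective_iff_injective_and_card]
      refine ⟨?_, by simp⟩
      intro g g' hgg
      simp only [Fin.mk.injEq] at hgg
      have h1' : (oio.symm ⟨σ.symm ↑g, hTK g⟩ : ℕ) = (oio.symm ⟨σ.symm ↑g', hTK g'⟩ : ℕ) := by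
        have := hrankT g; have := hrankT g'; omega
      have h2 := oio.symm.injective (Fin.val_injective h1')
      have h3 : σ.symm ↑g = σ.symm ↑g' := congrArg Subtype.val h2
      exact Subtype.ext (σ.symm.injective h3)
    have hbijC : Function.Bijective (fun a : {a : α // a ∈ (Dᶜ : Finset α)} =>
        oioc.symm ⟨σ.symm ↑a, hCK a⟩) := by
      rw [Fintype.bijective_iff_injective_and_card]
      refine ⟨?_, by simp only [Fintype.card_coe, Fintype.card_fin, hDc]⟩
      intro a a' haa
      have h2 := oioc.symm.injective haa
      have h3 : σ.symm ↑a = σ.symm ↑a' := congrArg Subtype.val h2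
      exact Subtype.ext (σ.symm.injective h3)
    set gS := Equiv.ofBijective _ hbijS with hgS
    set gT := Equiv.ofBijective _ hbijT with hgT
    set gC := Equiv.ofBijective _ hbijC with hgC
    refine ⟨(gS.symm, gT.symm, gC.symm), ?_⟩
    have hcoe : ∀ (u : {j // j ∈ K}) (h : (oio.symm u : ℕ) < S.card + 1 + T.card),
        ((oio ⟨(oio.symm u : ℕ), h⟩ : {j // j ∈ K}) : Fin m) = ↑u := by
      intro u h
      have h2 : (⟨(oio.symm u : ℕ), h⟩ : Fin (S.card + 1 + T.card)) = oio.symm u :=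
        Fin.ext rfl
      rw [h2, OrderIso.apply_symm_apply]
    have hps : ∀ a : α, posFun m x S T K hK hKc gS.symm gT.symm gC.symm a = σ.symm a := by
      intro a
      unfold posFun
      by_cases h1 : a ∈ S
      · rw [dif_pos h1]
        exact hcoe ⟨σ.symm a, hSK ⟨a, h1⟩⟩ _
      · by_cases h2 : a = x
        · rw [dif_neg h1, dif_pos h2]
          subst h2
          have h3 : (⟨S.card, by omega⟩ : Fin (S.card + 1 + T.card)) = ν := Fin.ext hνval.symm
          rw [h3, hν, OrderIso.apply_symm_apply]
        · by_cases h3 : a ∈ T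
          · rw [dif_neg h1, dif_neg h2, dif_pos h3]
            have h4 : (⟨S.card + 1 + ((gT ⟨a, h3⟩ : Fin T.card) : ℕ),
                Nat.add_lt_add_left (Fin.is_lt _) _⟩ :
                Fin (S.card + 1 + T.card))
                = oio.symm ⟨σ.symm ↑(⟨a, h3⟩ : {a // a ∈ T}), hTK ⟨a, h3⟩⟩ := by
              refine Fin.ext ?_
              show S.card + 1 + ((oio.symm ⟨σ.symm ↑(⟨a, h3⟩ : {a // a ∈ T}),
                hTK ⟨a, h3⟩⟩ : ℕ) - (S.card + 1)) = _
              have := hrankT ⟨a, h3⟩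
              omega
            have h5 := congrArg (fun i => ((oio i : {j // j ∈ K}) : Fin m)) h4
            have h6 : ((oio (oio.symm ⟨σ.symm ↑(⟨a, h3⟩ : {a // a ∈ T}), hTK ⟨a, h3⟩⟩) :
                {j // j ∈ K}) : Fin m) = σ.symm a := by rw [OrderIso.apply_symm_apply]
            exact h5.trans h6
          · rw [dif_neg h1, dif_neg h2, dif_neg h3]
            show ((oioc (oioc.symm ⟨σ.symm a, _⟩) : {j // j ∈ Kᶜ}) : Fin m) = σ.symm a
            rw [OrderIso.apply_symm_apply]
    have h10 : (Φ (gS.symm, gT.symm, gC.symm)).symm = σ.symm :=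
      Equiv.ext (fun a => (hΦsymm (gS.symm, gT.symm, gC.symm) a).trans (hps a))
    simpa using congrArg Equiv.symm h10
  -- conclude by cardinality transfer
  have e : B ≃ {σ : Fin m ≃ α // σ ∈ (univ.filter (fun σ : Fin m ≃ α =>
      ((insert x (S ∪ T)).image (fun d => σ.symm d) = K) ∧
      (∀ f ∈ S, (σ.symm f : ℕ) < (σ.symm x : ℕ)) ∧
      (∀ g ∈ T, (σ.symm x : ℕ) < (σ.symm g : ℕ))))} :=
    Equiv.ofBijective (fun b => ⟨Φ b, hmem b⟩)
      ⟨fun b b' h => hΦinj (Subtype.ext_iff.mp h),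
       fun σ => (hsurj σ.1 σ.2).imp (fun b hb => Subtype.ext hb)⟩
  have hBcard : Fintype.card B = S.card.factorial * T.card.factorial
      * (m - (S.card + 1 + T.card)).factorial := by
    rw [show Fintype.card B = Fintype.card ((Fin S.card ≃ {a // a ∈ S}) ×
      ((Fin T.card ≃ {a // a ∈ T}) ×
        (Fin (m - (S.card + 1 + T.card)) ≃ {a : α // a ∈ (Dᶜ : Finset α)}))) from rfl]
    rw [Fintype.card_prod, Fintype.card_prod]
    rw [Fintype.card_equiv (S.equivFin).symm, Fintype.card_equiv (T.equivFin).symm,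
      Fintype.card_equiv ((finCongr hDc.symm).trans (Dᶜ : Finset α).equivFin.symm)]
    simp [mul_assoc]
  calc (univ.filter (fun σ : Fin m ≃ α =>
      ((insert x (S ∪ T)).image (fun d => σ.symm d) = K) ∧
      (∀ f ∈ S, (σ.symm f : ℕ) < (σ.symm x : ℕ)) ∧
      (∀ g ∈ T, (σ.symm x : ℕ) < (σ.symm g : ℕ)))).card
      = Fintype.card ↥(univ.filter (fun σ : Fin m ≃ α =>
        ((insert x (S ∪ T)).image (fun d => σ.symm d) = K) ∧
        (∀ f ∈ S, (σ.symm f : ℕ) < (σ.symm x : ℕ)) ∧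
        (∀ g ∈ T, (σ.symm x : ℕ) < (σ.symm g : ℕ)))) := (Fintype.card_coe _).symm
    _ = Fintype.card B := (Fintype.card_congr e).symm
    _ = _ := hBcard
end Count3

section Count4
variable {α : Type*} [Fintype α] [DecidableEq α]

lemma count_main (m : ℕ) (hm : Fintype.card α = m) (x : α) (S T : Finset α)
    (hxS : x ∉ S) (hxT : x ∉ T) (hST : Disjoint S T) :
    (univ.filter (fun σ : Fin m ≃ α =>
      (∀ f ∈ S, (σ.symm f : ℕ) < (σ.symm x : ℕ)) ∧
      (∀ g ∈ T, (σ.symm x : ℕ) < (σ.symm g : ℕ)))).card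
      * (S.card + 1 + T.card).factorial
    = S.card.factorial * T.card.factorial * m.factorial := by
  classical
  have hxST : x ∉ S ∪ T := by simp [hxS, hxT]
  have hD : (insert x (S ∪ T)).card = S.card + 1 + T.card := by
    rw [Finset.card_insert_of_notMem hxST, Finset.card_union_of_disjoint hST]; omega
  have hrm : S.card + 1 + T.card ≤ m := by
    rw [← hD, ← hm]; exact Finset.card_le_univ _
  have hsplit : (univ.filter (fun σ : Fin m ≃ α =>
      (∀ f ∈ S, (σ.symm f : ℕ) < (σ.symm x : ℕ)) ∧
      (∀ g ∈ T, (σ.symm x : ℕ) < (σ.symm g : ℕ))))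
      = (Finset.powersetCard (S.card + 1 + T.card) (univ : Finset (Fin m))).biUnion
          (fun K => univ.filter (fun σ : Fin m ≃ α =>
            ((insert x (S ∪ T)).image (fun d => σ.symm d) = K) ∧
            (∀ f ∈ S, (σ.symm f : ℕ) < (σ.symm x : ℕ)) ∧
            (∀ g ∈ T, (σ.symm x : ℕ) < (σ.symm g : ℕ)))) := by
    ext σ
    simp only [Finset.mem_biUnion, Finset.mem_filter, Finset.mem_univ, true_and,
      Finset.mem_powersetCard]
    constructor
    · rintro ⟨h1, h2⟩
      exact ⟨(insert x (S ∪ T)).image (fun d => σ.symm d),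
        ⟨Finset.subset_univ _, by
          rw [Finset.card_image_of_injective _ σ.symm.injective, hD]⟩, rfl, h1, h2⟩
    · rintro ⟨K, -, -, h1, h2⟩
      exact ⟨h1, h2⟩
  have hdisj : ∀ K ∈ Finset.powersetCard (S.card + 1 + T.card) (univ : Finset (Fin m)),
      ∀ K' ∈ Finset.powersetCard (S.card + 1 + T.card) (univ : Finset (Fin m)), K ≠ K' →
      Disjoint (univ.filter (fun σ : Fin m ≃ α =>
        ((insert x (S ∪ T)).image (fun d => σ.symm d) = K) ∧
        (∀ f ∈ S, (σ.symm f : ℕ) < (σ.symm x : ℕ)) ∧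
        (∀ g ∈ T, (σ.symm x : ℕ) < (σ.symm g : ℕ))))
        (univ.filter (fun σ : Fin m ≃ α =>
        ((insert x (S ∪ T)).image (fun d => σ.symm d) = K') ∧
        (∀ f ∈ S, (σ.symm f : ℕ) < (σ.symm x : ℕ)) ∧
        (∀ g ∈ T, (σ.symm x : ℕ) < (σ.symm g : ℕ)))) := by
    intro K _ K' _ hKK
    rw [Finset.disjoint_left]
    intro σ h1 h2
    rw [Finset.mem_filter] at h1 h2
    exact hKK (h1.2.1 ▸ h2.2.1)
  rw [hsplit, Finset.card_biUnion hdisj]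
  have hsum : ∀ K ∈ Finset.powersetCard (S.card + 1 + T.card) (univ : Finset (Fin m)),
      (univ.filter (fun σ : Fin m ≃ α =>
        ((insert x (S ∪ T)).image (fun d => σ.symm d) = K) ∧
        (∀ f ∈ S, (σ.symm f : ℕ) < (σ.symm x : ℕ)) ∧
        (∀ g ∈ T, (σ.symm x : ℕ) < (σ.symm g : ℕ)))).card
      = S.card.factorial * T.card.factorial * (m - (S.card + 1 + T.card)).factorial := by
    intro K hKmem
    rw [Finset.mem_powersetCard] at hKmem
    exact cardAK m hm x S T hxS hxT hST K hKmem.2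
  rw [Finset.sum_congr rfl hsum, Finset.sum_const, smul_eq_mul,
    Finset.card_powersetCard, Finset.card_univ, Fintype.card_fin]
  calc m.choose (S.card + 1 + T.card) * (S.card.factorial * T.card.factorial
        * (m - (S.card + 1 + T.card)).factorial) * (S.card + 1 + T.card).factorial
      = S.card.factorial * T.card.factorial * (m.choose (S.card + 1 + T.card)
        * (S.card + 1 + T.card).factorial * (m - (S.card + 1 + T.card)).factorial) := by ring
    _ = S.card.factorial * T.card.factorial * m.factorial := by
        rw [Nat.choose_mul_factorial_mul_factorial hrm]
end Count4

section PrefixLemmas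
variable {V : Type*} [Fintype V] [DecidableEq V] {s : Finset (Sym2 V)}
  (ω : Fin s.card ≃ {e : Sym2 V // e ∈ s})

lemma mem_prefixEdges {e : Sym2 V} {i : ℕ} :
    e ∈ prefixEdges ω i ↔ ∃ he : e ∈ s, ((ω.symm ⟨e, he⟩ : Fin s.card) : ℕ) < i := by
  unfold prefixEdges
  simp only [Finset.mem_image, Finset.mem_filter, Finset.mem_univ, true_and]
  constructor
  · rintro ⟨j, hj, rfl⟩
    exact ⟨(ω j).2, by rw [Equiv.symm_apply_apply]; exact hj⟩
  · rintro ⟨he, h⟩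
    exact ⟨ω.symm ⟨e, he⟩, h, by rw [Equiv.apply_symm_apply]⟩

lemma prefixEdges_mono {i i' : ℕ} (h : i ≤ i') : prefixEdges ω i ⊆ prefixEdges ω i' := by
  intro e he
  rw [mem_prefixEdges] at he ⊢
  obtain ⟨h1, h2⟩ := he
  exact ⟨h1, lt_of_lt_of_le h2 h⟩

lemma prefixEdges_card : prefixEdges ω s.card = s := by
  apply Finset.Subset.antisymm
  · intro e he
    rw [mem_prefixEdges] at he
    exact he.1
  · intro e he
    rw [mem_prefixEdges]
    exact ⟨he, (ω.symm ⟨e, he⟩).isLt⟩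

lemma degIn_mono {s₁ s₂ : Finset (Sym2 V)} (h : s₁ ⊆ s₂) (v : V) : degIn s₁ v ≤ degIn s₂ v :=
  Finset.card_le_card (Finset.filter_subset_filter _ h)

variable {δ : ℕ}

lemma stopIndex_spec (hcov : ∀ v : V, δ ≤ degIn s v) :
    ∀ v : V, δ ≤ degIn (prefixEdges ω (stopIndex δ ω)) v := by
  have h : s.card ∈ {i | ∀ v : V, δ ≤ degIn (prefixEdges ω i) v} := by
    intro v
    rw [prefixEdges_card]
    exact hcov v
  exact Nat.sInf_mem ⟨s.card, h⟩

lemma lt_stopIndex_of_not (hcov : ∀ v : V, δ ≤ degIn s v) {i : ℕ}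
    (h : ¬ ∀ v : V, δ ≤ degIn (prefixEdges ω i) v) : i < stopIndex δ ω := by
  by_contra hc
  push_neg at hc
  exact h (fun v => le_trans (stopIndex_spec ω hcov v)
    (degIn_mono (prefixEdges_mono ω hc) v))

lemma not_deg_of_lt_stopIndex {i : ℕ} (h : i < stopIndex δ ω) :
    ¬ ∀ v : V, δ ≤ degIn (prefixEdges ω i) v :=
  Nat.notMem_of_lt_sInf h
end PrefixLemmas

section Matchings
open Sum
variable {n : ℕ}

def graphOfPerm (n : ℕ) (π : Equiv.Perm (Fin n)) : SimpleGraph (Fin n ⊕ Fin n) where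
  Adj u v := (∃ a, u = Sum.inl a ∧ v = Sum.inr (π a)) ∨ (∃ a, v = Sum.inl a ∧ u = Sum.inr (π a))
  symm := by
    refine ⟨?_⟩
    rintro u v (⟨a, h1, h2⟩ | ⟨a, h1, h2⟩)
    · exact Or.inr ⟨a, h1, h2⟩
    · exact Or.inl ⟨a, h1, h2⟩
  loopless := by
    refine ⟨?_⟩
    rintro u (⟨a, h1, h2⟩ | ⟨a, h1, h2⟩) <;> (rw [h1] at h2; simp at h2)

def matchEdges (n : ℕ) (π : Equiv.Perm (Fin n)) : Finset (Sym2 (Fin n ⊕ Fin n)) :=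
  Finset.univ.image (fun a : Fin n => s(Sum.inl a, Sum.inr (π a)))

lemma mem_matchEdges {π : Equiv.Perm (Fin n)} {e : Sym2 (Fin n ⊕ Fin n)} :
    e ∈ matchEdges n π ↔ ∃ a, e = s(Sum.inl a, Sum.inr (π a)) := by
  simp [matchEdges, eq_comm]

lemma edgeSet_graphOfPerm (π : Equiv.Perm (Fin n)) :
    (graphOfPerm n π).edgeSet = ↑(matchEdges n π) := by
  ext e
  induction e using Sym2.ind with
  | _ x y =>
    rw [SimpleGraph.mem_edgeSet, Finset.mem_coe, mem_matchEdges]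
    constructor
    · rintro (⟨a, rfl, rfl⟩ | ⟨a, rfl, rfl⟩)
      · exact ⟨a, rfl⟩
      · exact ⟨a, Sym2.eq_swap⟩
    · rintro ⟨a, ha⟩
      rcases Sym2.eq_iff.mp ha with ⟨h1, h2⟩ | ⟨h1, h2⟩
      · exact Or.inl ⟨a, h1, h2⟩
      · exact Or.inr ⟨a, h2, h1⟩

lemma graphOfPerm_le (π : Equiv.Perm (Fin n)) :
    graphOfPerm n π ≤ completeBipartiteGraph (Fin n) (Fin n) := by
  rintro u v (⟨a, rfl, rfl⟩ | ⟨a, rfl, rfl⟩) <;> simp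

lemma neighborSet_graphOfPerm_inl (π : Equiv.Perm (Fin n)) (a : Fin n) :
    (graphOfPerm n π).neighborSet (Sum.inl a) = {Sum.inr (π a)} := by
  ext w
  simp only [SimpleGraph.mem_neighborSet, Set.mem_singleton_iff]
  constructor
  · rintro (⟨a', h1, rfl⟩ | ⟨a', h1, h2⟩)
    · rw [Sum.inl.injEq] at h1
      rw [h1]
    · exact absurd h2 (by simp)
  · rintro rfl
    exact Or.inl ⟨a, rfl, rfl⟩

lemma neighborSet_graphOfPerm_inr (π : Equiv.Perm (Fin n)) (b : Fin n) :
    (graphOfPerm n π).neighborSet (Sum.inr b) = {Sum.inl (π.symm b)} := by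
  ext w
  simp only [SimpleGraph.mem_neighborSet, Set.mem_singleton_iff]
  constructor
  · rintro (⟨a', h1, h2⟩ | ⟨a', rfl, h2⟩)
    · exact absurd h1 (by simp)
    · rw [Sum.inr.injEq] at h2
      rw [h2, Equiv.symm_apply_apply]
  · rintro rfl
    exact Or.inr ⟨π.symm b, rfl, by rw [Equiv.apply_symm_apply]⟩

lemma reg_graphOfPerm (π : Equiv.Perm (Fin n)) : regOfDegree (graphOfPerm n π) 1 := by
  intro v
  cases v with
  | inl a => rw [neighborSet_graphOfPerm_inl]; exact Set.ncard_singleton _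
  | inr b => rw [neighborSet_graphOfPerm_inr]; exact Set.ncard_singleton _

lemma graphOfPerm_injective : Function.Injective (graphOfPerm n) := by
  intro π π' h
  apply Equiv.ext
  intro a
  have h1 : (graphOfPerm n π).Adj (Sum.inl a) (Sum.inr (π a)) := Or.inl ⟨a, rfl, rfl⟩
  rw [h] at h1
  rcases h1 with ⟨a', h2, h3⟩ | ⟨a', h2, h3⟩
  · rw [Sum.inl.injEq] at h2
    rw [Sum.inr.injEq] at h3
    rw [h3, ← h2]
  · exact absurd h3 (by simp)

lemma exists_perm_of_matching {J : SimpleGraph (Fin n ⊕ Fin n)}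
    (hle : J ≤ completeBipartiteGraph (Fin n) (Fin n)) (hreg : regOfDegree J 1) :
    ∃ π, graphOfPerm n π = J := by
  have h1 : ∀ a : Fin n, ∃ b : Fin n, J.neighborSet (Sum.inl a) = {Sum.inr b} := by
    intro a
    obtain ⟨w, hw⟩ := Set.ncard_eq_one.mp (hreg (Sum.inl a))
    have hadj : J.Adj (Sum.inl a) w := by
      rw [← SimpleGraph.mem_neighborSet, hw]
      exact Set.mem_singleton w
    have hG := hle hadj
    cases w with
    | inl c => simp at hG
    | inr b => exact ⟨b, hw⟩
  choose f hf using h1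
  have hadjf : ∀ a, J.Adj (Sum.inl a) (Sum.inr (f a)) := by
    intro a
    rw [← SimpleGraph.mem_neighborSet, hf a]
    exact Set.mem_singleton _
  have hinj : Function.Injective f := by
    intro a a' haa
    obtain ⟨w, hw⟩ := Set.ncard_eq_one.mp (hreg (Sum.inr (f a)))
    have m1 : (Sum.inl a : Fin n ⊕ Fin n) ∈ J.neighborSet (Sum.inr (f a)) :=
      (hadjf a).symm
    have m2 : (Sum.inl a' : Fin n ⊕ Fin n) ∈ J.neighborSet (Sum.inr (f a)) := by
      rw [haa] at *
      exact (hadjf a').symm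
    rw [hw, Set.mem_singleton_iff] at m1 m2
    rw [← Sum.inl.injEq (α := Fin n) (β := Fin n)]
    rw [m1, m2]
  refine ⟨Equiv.ofBijective f ((Finite.injective_iff_bijective).mp hinj), ?_⟩
  ext u v
  constructor
  · rintro (⟨a, rfl, rfl⟩ | ⟨a, rfl, rfl⟩)
    · exact hadjf a
    · exact (hadjf a).symm
  · intro hJ
    have hG := hle hJ
    cases u with
    | inl a =>
      cases v with
      | inl c => simp at hG
      | inr b =>
        have hm : (Sum.inr b : Fin n ⊕ Fin n) ∈ J.neighborSet (Sum.inl a) := hJ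
        rw [hf a, Set.mem_singleton_iff, Sum.inr.injEq] at hm
        exact Or.inl ⟨a, rfl, by rw [hm]; rfl⟩
    | inr b =>
      cases v with
      | inr c => simp at hG
      | inl c =>
        have hm : (Sum.inr b : Fin n ⊕ Fin n) ∈ J.neighborSet (Sum.inl c) := hJ.symm
        rw [hf c, Set.mem_singleton_iff, Sum.inr.injEq] at hm
        exact Or.inr ⟨c, rfl, by rw [hm]; rfl⟩

lemma matching_ncard_eq (F : Finset (Sym2 (Fin n ⊕ Fin n))) :
    {J : SimpleGraph (Fin n ⊕ Fin n) | J ≤ completeBipartiteGraph (Fin n) (Fin n) ∧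
      regOfDegree J 1 ∧ J.edgeSet ⊆ ↑F}.ncard
    = (Finset.univ.filter (fun π : Equiv.Perm (Fin n) => matchEdges n π ⊆ F)).card := by
  classical
  have hset : {J : SimpleGraph (Fin n ⊕ Fin n) | J ≤ completeBipartiteGraph (Fin n) (Fin n) ∧
      regOfDegree J 1 ∧ J.edgeSet ⊆ ↑F}
      = (graphOfPerm n) '' ↑(Finset.univ.filter
          (fun π : Equiv.Perm (Fin n) => matchEdges n π ⊆ F)) := by
    ext J
    simp only [Set.mem_setOf_eq, Set.mem_image, Finset.mem_coe, Finset.mem_filter,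
      Finset.mem_univ, true_and]
    constructor
    · rintro ⟨hle, hreg, hsub⟩
      obtain ⟨π, rfl⟩ := exists_perm_of_matching hle hreg
      refine ⟨π, ?_, rfl⟩
      intro e he
      exact hsub (by rw [edgeSet_graphOfPerm]; exact he)
    · rintro ⟨π, hπ, rfl⟩
      refine ⟨graphOfPerm_le π, reg_graphOfPerm π, ?_⟩
      rw [edgeSet_graphOfPerm]
      intro e he
      exact hπ he
  rw [hset, Set.ncard_image_of_injective _ graphOfPerm_injective, Set.ncard_coe_finset]
end Matchings

section BipFacts
open Sum
variable {n : ℕ}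

lemma mem_bip_edgeFinset {e : Sym2 (Fin n ⊕ Fin n)} :
    e ∈ (completeBipartiteGraph (Fin n) (Fin n)).edgeFinset ↔
      ∃ a b : Fin n, e = s(Sum.inl a, Sum.inr b) := by
  rw [SimpleGraph.mem_edgeFinset]
  induction e using Sym2.ind with
  | _ x y =>
    rw [SimpleGraph.mem_edgeSet]
    constructor
    · intro h
      rcases h with ⟨h1, h2⟩ | ⟨h1, h2⟩
      · obtain ⟨a, rfl⟩ := Sum.isLeft_iff.mp h1
        obtain ⟨b, rfl⟩ := Sum.isRight_iff.mp h2
        exact ⟨a, b, rfl⟩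
      · obtain ⟨a, rfl⟩ := Sum.isRight_iff.mp h1
        obtain ⟨b, rfl⟩ := Sum.isLeft_iff.mp h2
        exact ⟨b, a, Sym2.eq_swap⟩
    · rintro ⟨a, b, hab⟩
      rcases Sym2.eq_iff.mp hab with ⟨rfl, rfl⟩ | ⟨rfl, rfl⟩
      · simp
      · simp

lemma matchEdges_subset (π : Equiv.Perm (Fin n)) :
    matchEdges n π ⊆ (completeBipartiteGraph (Fin n) (Fin n)).edgeFinset := by
  intro e he
  obtain ⟨a, rfl⟩ := mem_matchEdges.mp he
  exact mem_bip_edgeFinset.mpr ⟨a, π a, rfl⟩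

lemma matchEdges_card (π : Equiv.Perm (Fin n)) : (matchEdges n π).card = n := by
  unfold matchEdges
  rw [Finset.card_image_of_injective _ ?_, Finset.card_univ, Fintype.card_fin]
  intro a a' h
  rcases Sym2.eq_iff.mp h with ⟨h1, -⟩ | ⟨h1, -⟩
  · exact Sum.inl.injEq .. |>.mp h1
  · exact absurd h1 (by simp)

lemma matchEdges_unique (π : Equiv.Perm (Fin n)) {v : Fin n ⊕ Fin n}
    {f f' : Sym2 (Fin n ⊕ Fin n)} (hf : f ∈ matchEdges n π) (hf' : f' ∈ matchEdges n π)
    (hv : v ∈ f) (hv' : v ∈ f') : f = f' := by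
  obtain ⟨a, rfl⟩ := mem_matchEdges.mp hf
  obtain ⟨a', rfl⟩ := mem_matchEdges.mp hf'
  cases v with
  | inl c =>
    rcases Sym2.mem_iff.mp hv with h1 | h1 <;> rcases Sym2.mem_iff.mp hv' with h2 | h2 <;>
      first
      | (rw [Sum.inl.injEq] at h1 h2; rw [← h1, ← h2])
      | simp_all
  | inr c =>
    rcases Sym2.mem_iff.mp hv with h1 | h1 <;> rcases Sym2.mem_iff.mp hv' with h2 | h2 <;>
      first
      | (rw [Sum.inr.injEq] at h1 h2;
         have : a = a' := π.injective (by rw [← h1, ← h2]);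
         rw [this])
      | simp_all

lemma matchEdges_cover (π : Equiv.Perm (Fin n)) (v : Fin n ⊕ Fin n) :
    ∃ f ∈ matchEdges n π, v ∈ f := by
  cases v with
  | inl a => exact ⟨s(Sum.inl a, Sum.inr (π a)), mem_matchEdges.mpr ⟨a, rfl⟩, by simp⟩
  | inr b => exact ⟨s(Sum.inl (π.symm b), Sum.inr b), mem_matchEdges.mpr
      ⟨π.symm b, by rw [Equiv.apply_symm_apply]⟩, by simp⟩

lemma bip_degIn (v : Fin n ⊕ Fin n) :
    degIn (completeBipartiteGraph (Fin n) (Fin n)).edgeFinset v = n := by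
  unfold degIn
  cases v with
  | inl a =>
    have himg : (completeBipartiteGraph (Fin n) (Fin n)).edgeFinset.filter
        (fun e => Sum.inl a ∈ e)
        = Finset.univ.image (fun b : Fin n => s(Sum.inl a, Sum.inr b)) := by
      ext e
      simp only [Finset.mem_filter, Finset.mem_image, Finset.mem_univ, true_and]
      constructor
      · rintro ⟨he, hv⟩
        obtain ⟨a', b', rfl⟩ := mem_bip_edgeFinset.mp he
        rcases Sym2.mem_iff.mp hv with h1 | h1
        · rw [Sum.inl.injEq] at h1
          exact ⟨b', by rw [h1]⟩
        · exact absurd h1 (by simp)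
      · rintro ⟨b, rfl⟩
        exact ⟨mem_bip_edgeFinset.mpr ⟨a, b, rfl⟩, by simp⟩
    rw [himg, Finset.card_image_of_injective _ ?_, Finset.card_univ, Fintype.card_fin]
    intro b b' h
    rcases Sym2.eq_iff.mp h with ⟨-, h1⟩ | ⟨h1, -⟩
    · exact Sum.inr.injEq .. |>.mp h1
    · exact absurd h1 (by simp)
  | inr b =>
    have himg : (completeBipartiteGraph (Fin n) (Fin n)).edgeFinset.filter
        (fun e => Sum.inr b ∈ e)
        = Finset.univ.image (fun a : Fin n => s(Sum.inl a, Sum.inr b)) := by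
      ext e
      simp only [Finset.mem_filter, Finset.mem_image, Finset.mem_univ, true_and]
      constructor
      · rintro ⟨he, hv⟩
        obtain ⟨a', b', rfl⟩ := mem_bip_edgeFinset.mp he
        rcases Sym2.mem_iff.mp hv with h1 | h1
        · exact absurd h1 (by simp)
        · rw [Sum.inr.injEq] at h1
          exact ⟨a', by rw [h1]⟩
      · rintro ⟨a, rfl⟩
        exact ⟨mem_bip_edgeFinset.mpr ⟨a, b, rfl⟩, by simp⟩
    rw [himg, Finset.card_image_of_injective _ ?_, Finset.card_univ, Fintype.card_fin]
    intro a a' h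
    rcases Sym2.eq_iff.mp h with ⟨h1, -⟩ | ⟨-, h1⟩
    · exact Sum.inl.injEq .. |>.mp h1
    · exact absurd h1 (by simp)

lemma bip_cover (hn : 1 ≤ n) (v : Fin n ⊕ Fin n) :
    1 ≤ degIn (completeBipartiteGraph (Fin n) (Fin n)).edgeFinset v := by
  rw [bip_degIn]; exact hn

end BipFacts

section Epos
variable {V : Type*} [Fintype V] [DecidableEq V] {s : Finset (Sym2 V)}

def epos (ω : Fin s.card ≃ {e : Sym2 V // e ∈ s}) (f : Sym2 V) : ℕ :=
  if hf : f ∈ s then ((ω.symm ⟨f, hf⟩ : Fin s.card) : ℕ) else 0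

lemma epos_eq (ω : Fin s.card ≃ {e : Sym2 V // e ∈ s}) {f : Sym2 V} (hf : f ∈ s) :
    epos ω f = ((ω.symm ⟨f, hf⟩ : Fin s.card) : ℕ) := dif_pos hf

lemma epos_inj (ω : Fin s.card ≃ {e : Sym2 V // e ∈ s}) {f g : Sym2 V} (hf : f ∈ s)
    (hg : g ∈ s) (h : epos ω f = epos ω g) : f = g := by
  rw [epos_eq ω hf, epos_eq ω hg] at h
  have := ω.symm.injective (Fin.val_injective h)
  exact congrArg Subtype.val this

lemma mem_prefixEdges_iff_epos (ω : Fin s.card ≃ {e : Sym2 V // e ∈ s}) {f : Sym2 V}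
    (hf : f ∈ s) {i : ℕ} : f ∈ prefixEdges ω i ↔ epos ω f < i := by
  rw [mem_prefixEdges, epos_eq ω hf]
  constructor
  · rintro ⟨he, h⟩
    exact h
  · intro h
    exact ⟨hf, h⟩

lemma count_ordered (X Y : Finset (Sym2 V)) (hX : X ⊆ s) (hY : Y ⊆ s) {e : Sym2 V}
    (he : e ∈ s) (heX : e ∉ X) (heY : e ∉ Y) (hXY : Disjoint X Y) :
    (Finset.univ.filter (fun ω : Fin s.card ≃ {e : Sym2 V // e ∈ s} =>
      (∀ f ∈ X, epos ω f < epos ω e) ∧ (∀ g ∈ Y, epos ω e < epos ω g))).card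
      * (X.card + 1 + Y.card).factorial
    = X.card.factorial * Y.card.factorial * (s.card).factorial := by
  classical
  have hXc : (X.subtype (· ∈ s)).card = X.card := by
    rw [Finset.card_subtype, Finset.filter_true_of_mem (fun x hx => hX hx)]
  have hYc : (Y.subtype (· ∈ s)).card = Y.card := by
    rw [Finset.card_subtype, Finset.filter_true_of_mem (fun x hx => hY hx)]
  have hfeq : (Finset.univ.filter (fun ω : Fin s.card ≃ {e : Sym2 V // e ∈ s} =>
      (∀ f ∈ X, epos ω f < epos ω e) ∧ (∀ g ∈ Y, epos ω e < epos ω g)))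
      = (Finset.univ.filter (fun ω : Fin s.card ≃ {e : Sym2 V // e ∈ s} =>
      (∀ f ∈ X.subtype (· ∈ s), ((ω.symm f : Fin s.card) : ℕ)
          < ((ω.symm ⟨e, he⟩ : Fin s.card) : ℕ)) ∧
      (∀ g ∈ Y.subtype (· ∈ s), ((ω.symm ⟨e, he⟩ : Fin s.card) : ℕ)
          < ((ω.symm g : Fin s.card) : ℕ)))) := by
    apply Finset.filter_congr
    intro ω _
    constructor
    · rintro ⟨h1, h2⟩
      constructor
      · intro f hf
        have hfX := Finset.mem_subtype.mp hf
        have := h1 _ hfX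
        rw [epos_eq ω (hX hfX), epos_eq ω he] at this
        exact this
      · intro g hg
        have hgY := Finset.mem_subtype.mp hg
        have := h2 _ hgY
        rw [epos_eq ω (hY hgY), epos_eq ω he] at this
        exact this
    · rintro ⟨h1, h2⟩
      constructor
      · intro f hf
        rw [epos_eq ω (hX hf), epos_eq ω he]
        exact h1 ⟨f, hX hf⟩ (Finset.mem_subtype.mpr hf)
      · intro g hg
        rw [epos_eq ω (hY hg), epos_eq ω he]
        exact h2 ⟨g, hY hg⟩ (Finset.mem_subtype.mpr hg)
  rw [hfeq, ← hXc, ← hYc]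
  refine count_main s.card (Fintype.card_coe s) ⟨e, he⟩ (X.subtype (· ∈ s))
    (Y.subtype (· ∈ s)) ?_ ?_ ?_
  · intro h
    exact heX (Finset.mem_subtype.mp h)
  · intro h
    exact heY (Finset.mem_subtype.mp h)
  · rw [Finset.disjoint_left]
    intro f h1 h2
    exact Finset.disjoint_left.mp hXY (Finset.mem_subtype.mp h1) (Finset.mem_subtype.mp h2)
end Epos

section Event
variable {V : Type*} [Fintype V] [DecidableEq V] {s : Finset (Sym2 V)}

lemma event_iff (hcov : ∀ v : V, 1 ≤ degIn s v) (ω : Fin s.card ≃ {e : Sym2 V // e ∈ s})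
    (M : Finset (Sym2 V)) (hMs : M ⊆ s) (hMne : M.Nonempty)
    (hMcover : ∀ v : V, ∃ f ∈ M, v ∈ f) :
    M ⊆ finalEdges 1 ω ↔
      ∃ e ∈ M, (∀ f ∈ M.erase e, epos ω f < epos ω e) ∧
        (∃ v, v ∈ e ∧ ∀ g ∈ (s.filter (fun x => v ∈ x)).erase e, epos ω e < epos ω g) := by
  unfold finalEdges
  constructor
  · intro hsub
    obtain ⟨e, he, hmax⟩ := Finset.exists_max_image M (epos ω) hMne
    have hes := hMs he
    have hstrict : ∀ f ∈ M.erase e, epos ω f < epos ω e := by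
      intro f hf
      have hfM := Finset.mem_of_mem_erase hf
      have hne := Finset.ne_of_mem_erase hf
      rcases lt_or_eq_of_le (hmax f hfM) with h | h
      · exact h
      · exact absurd (epos_inj ω (hMs hfM) hes h) hne
    have het : epos ω e < stopIndex 1 ω :=
      (mem_prefixEdges_iff_epos ω hes).mp (hsub he)
    have hnot := not_deg_of_lt_stopIndex ω het
    push_neg at hnot
    obtain ⟨v, hv⟩ := hnot
    have hvzero : ∀ g ∈ prefixEdges ω (epos ω e), v ∉ g := by
      intro g hg hvg
      have h1 : 1 ≤ degIn (prefixEdges ω (epos ω e)) v :=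
        Finset.card_pos.mpr ⟨g, Finset.mem_filter.mpr ⟨hg, hvg⟩⟩
      omega
    obtain ⟨f, hfM, hvf⟩ := hMcover v
    have hfe : f = e := by
      by_contra hne
      have h1 : epos ω f < epos ω e := hstrict f (Finset.mem_erase.mpr ⟨hne, hfM⟩)
      exact hvzero f ((mem_prefixEdges_iff_epos ω (hMs hfM)).mpr h1) hvf
    subst hfe
    refine ⟨f, hfM, hstrict, v, hvf, ?_⟩
    intro g hg
    have hgf := Finset.mem_of_mem_erase hg
    have hgs := (Finset.mem_filter.mp hgf).1
    have hvg := (Finset.mem_filter.mp hgf).2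
    have hgne := Finset.ne_of_mem_erase hg
    have h2 : ¬ epos ω g < epos ω f := fun h =>
      hvzero g ((mem_prefixEdges_iff_epos ω hgs).mpr h) hvg
    rcases lt_or_eq_of_le (not_lt.mp h2) with h | h
    · exact h
    · exact absurd (epos_inj ω (hMs hfM) hgs h) (Ne.symm hgne)
  · rintro ⟨e, heM, hmax, v, hve, hafter⟩
    have hes := hMs heM
    have hnotall : ¬ ∀ u : V, 1 ≤ degIn (prefixEdges ω (epos ω e)) u := by
      intro hall
      obtain ⟨g, hg⟩ := Finset.card_pos.mp (hall v)
      have hgp := (Finset.mem_filter.mp hg).1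
      have hvg := (Finset.mem_filter.mp hg).2
      obtain ⟨hgs, -⟩ := (mem_prefixEdges ω).mp hgp
      have hgt : epos ω g < epos ω e := (mem_prefixEdges_iff_epos ω hgs).mp hgp
      have hgne : g ≠ e := fun h => by rw [h] at hgt; omega
      have := hafter g (Finset.mem_erase.mpr ⟨hgne, Finset.mem_filter.mpr ⟨hgs, hvg⟩⟩)
      omega
    have hlt := lt_stopIndex_of_not ω hcov hnotall
    intro f hfM
    have hfs := hMs hfM
    rw [mem_prefixEdges_iff_epos ω hfs]
    rcases eq_or_ne f e with rfl | hne
    · omega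
    · have := hmax f (Finset.mem_erase.mpr ⟨hne, hfM⟩)
      omega
end Event

section PerPi
open Sum
variable {n : ℕ}

/-- The event attached to edge `e` of the matching. -/
def condE (n : ℕ) (π : Equiv.Perm (Fin n)) (e : Sym2 (Fin n ⊕ Fin n))
    (ω : Fin (completeBipartiteGraph (Fin n) (Fin n)).edgeFinset.card ≃
      {f : Sym2 (Fin n ⊕ Fin n) // f ∈ (completeBipartiteGraph (Fin n) (Fin n)).edgeFinset}) :
    Prop :=
  (∀ f ∈ (matchEdges n π).erase e, epos ω f < epos ω e) ∧
  (∃ v, v ∈ e ∧ ∀ g ∈ ((completeBipartiteGraph (Fin n) (Fin n)).edgeFinset.filter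
      (fun x => v ∈ x)).erase e, epos ω e < epos ω g)

instance (π : Equiv.Perm (Fin n)) (e : Sym2 (Fin n ⊕ Fin n)) :
    DecidablePred (condE n π e) := fun ω => by
  unfold condE
  infer_instance

lemma cntE_eq (hn : 1 ≤ n) (π : Equiv.Perm (Fin n)) {e : Sym2 (Fin n ⊕ Fin n)}
    (he : e ∈ matchEdges n π) :
    ∃ c1 c2 c3 : ℕ,
      ((Finset.univ.filter (condE n π e)).card + c3 = c1 + c2) ∧
      c1 * (2 * n - 1).factorial = (n - 1).factorial * (n - 1).factorial
        * (completeBipartiteGraph (Fin n) (Fin n)).edgeFinset.card.factorial ∧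
      c2 * (2 * n - 1).factorial = (n - 1).factorial * (n - 1).factorial
        * (completeBipartiteGraph (Fin n) (Fin n)).edgeFinset.card.factorial ∧
      c3 * (3 * n - 2).factorial = (n - 1).factorial * (2 * n - 2).factorial
        * (completeBipartiteGraph (Fin n) (Fin n)).edgeFinset.card.factorial := by
  classical
  set sG := (completeBipartiteGraph (Fin n) (Fin n)).edgeFinset with hsG
  obtain ⟨a, rfl⟩ := mem_matchEdges.mp he
  set u : Fin n ⊕ Fin n := Sum.inl a with hu
  set w : Fin n ⊕ Fin n := Sum.inr (π a) with hw
  set e := s(u, w) with hedef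
  have huw : u ≠ w := by simp [hu, hw]
  have hue : u ∈ e := by rw [hedef]; simp
  have hwe : w ∈ e := by rw [hedef]; simp
  have hes : e ∈ sG := matchEdges_subset π he
  set X := (matchEdges n π).erase e with hX
  have hXcard : X.card = n - 1 := by
    rw [hX, Finset.card_erase_of_mem he, matchEdges_card]
  have hXs : X ⊆ sG := fun f hf =>
    matchEdges_subset π (Finset.mem_of_mem_erase hf)
  have heX : e ∉ X := Finset.notMem_erase _ _
  set incu := sG.filter (fun x => u ∈ x) with hincu
  set incw := sG.filter (fun x => w ∈ x) with hincw
  have hincu_card : incu.card = n := bip_degIn u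
  have hincw_card : incw.card = n := bip_degIn w
  have heincu : e ∈ incu := Finset.mem_filter.mpr ⟨hes, hue⟩
  have heincw : e ∈ incw := Finset.mem_filter.mpr ⟨hes, hwe⟩
  set Yu := incu.erase e with hYu
  set Yw := incw.erase e with hYw
  set Y2 := (incu ∪ incw).erase e with hY2
  have hYucard : Yu.card = n - 1 := by rw [hYu, Finset.card_erase_of_mem heincu, hincu_card]
  have hYwcard : Yw.card = n - 1 := by rw [hYw, Finset.card_erase_of_mem heincw, hincw_card]
  have hinter : incu ∩ incw = {e} := by
    ext g
    rw [Finset.mem_inter, Finset.mem_singleton, hincu, hincw, Finset.mem_filter,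
      Finset.mem_filter]
    constructor
    · rintro ⟨⟨hgs, hug⟩, ⟨-, hwg⟩⟩
      rw [hedef]
      exact (Sym2.mem_and_mem_iff huw).mp ⟨hug, hwg⟩
    · rintro rfl
      exact ⟨⟨hes, hue⟩, ⟨hes, hwe⟩⟩
  have hunion_card : (incu ∪ incw).card = 2 * n - 1 := by
    have h1 := Finset.card_union_add_card_inter incu incw
    rw [hinter, Finset.card_singleton, hincu_card, hincw_card] at h1
    omega
  have hY2card : Y2.card = 2 * n - 2 := by
    rw [hY2, Finset.card_erase_of_mem (Finset.mem_union_left _ heincu), hunion_card]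
    omega
  have hYus : Yu ⊆ sG := fun g hg =>
    (Finset.mem_filter.mp (Finset.mem_of_mem_erase hg)).1
  have hYws : Yw ⊆ sG := fun g hg =>
    (Finset.mem_filter.mp (Finset.mem_of_mem_erase hg)).1
  have hY2s : Y2 ⊆ sG := by
    intro g hg
    rcases Finset.mem_union.mp (Finset.mem_of_mem_erase hg) with h | h
    · exact (Finset.mem_filter.mp h).1
    · exact (Finset.mem_filter.mp h).1
  have heYu : e ∉ Yu := Finset.notMem_erase _ _
  have heYw : e ∉ Yw := Finset.notMem_erase _ _
  have heY2 : e ∉ Y2 := Finset.notMem_erase _ _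
  have hdisj : ∀ v, v ∈ e → Disjoint X ((sG.filter (fun x => v ∈ x)).erase e) := by
    intro v hv
    rw [Finset.disjoint_left]
    intro f hfX hfY
    have hfM := Finset.mem_of_mem_erase hfX
    have hfne := Finset.ne_of_mem_erase hfX
    have hvf := (Finset.mem_filter.mp (Finset.mem_of_mem_erase hfY)).2
    exact hfne (matchEdges_unique π hfM he hvf hv)
  have hdisjXu : Disjoint X Yu := hdisj u hue
  have hdisjXw : Disjoint X Yw := hdisj w hwe
  have hdisjX2 : Disjoint X Y2 := by
    rw [Finset.disjoint_left]
    intro f hfX hfY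
    rcases Finset.mem_union.mp (Finset.mem_of_mem_erase hfY) with h | h
    · exact Finset.disjoint_left.mp hdisjXu hfX
        (Finset.mem_erase.mpr ⟨Finset.ne_of_mem_erase hfY, h⟩)
    · exact Finset.disjoint_left.mp hdisjXw hfX
        (Finset.mem_erase.mpr ⟨Finset.ne_of_mem_erase hfY, h⟩)
  -- the three basic counts
  have hc1 := count_ordered X Yu hXs hYus hes heX heYu hdisjXu
  have hc2 := count_ordered X Yw hXs hYws hes heX heYw hdisjXw
  have hc3 := count_ordered X Y2 hXs hY2s hes heX heY2 hdisjX2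
  rw [hXcard, hYucard] at hc1
  rw [hXcard, hYwcard] at hc2
  rw [hXcard, hY2card] at hc3
  have harith1 : n - 1 + 1 + (n - 1) = 2 * n - 1 := by omega
  have harith2 : n - 1 + 1 + (2 * n - 2) = 3 * n - 2 := by omega
  rw [harith1] at hc1 hc2
  rw [harith2] at hc3
  refine ⟨_, _, _, ?_, hc1, hc2, hc3⟩
  -- inclusion–exclusion
  have hsplit : ∀ ω, condE n π e ω ↔
      ((∀ f ∈ X, epos ω f < epos ω e) ∧ (∀ g ∈ Yu, epos ω e < epos ω g)) ∨
      ((∀ f ∈ X, epos ω f < epos ω e) ∧ (∀ g ∈ Yw, epos ω e < epos ω g)) := by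
    intro ω
    unfold condE
    constructor
    · rintro ⟨hC, v, hv, hR⟩
      rcases Sym2.mem_iff.mp hv with rfl | rfl
      · exact Or.inl ⟨hC, hR⟩
      · exact Or.inr ⟨hC, hR⟩
    · rintro (⟨hC, hR⟩ | ⟨hC, hR⟩)
      · exact ⟨hC, u, hue, hR⟩
      · exact ⟨hC, w, hwe, hR⟩
  have hfe : Finset.univ.filter (condE n π e)
      = (Finset.univ.filter (fun ω => (∀ f ∈ X, epos ω f < epos ω e) ∧
          (∀ g ∈ Yu, epos ω e < epos ω g)))
        ∪ (Finset.univ.filter (fun ω => (∀ f ∈ X, epos ω f < epos ω e) ∧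
          (∀ g ∈ Yw, epos ω e < epos ω g))) := by
    ext ω
    simp only [Finset.mem_union, Finset.mem_filter, Finset.mem_univ, true_and]
    exact hsplit ω
  have hfi : (Finset.univ.filter (fun ω : Fin sG.card ≃
          {f : Sym2 (Fin n ⊕ Fin n) // f ∈ sG} => (∀ f ∈ X, epos ω f < epos ω e) ∧
          (∀ g ∈ Y2, epos ω e < epos ω g)))
      = (Finset.univ.filter (fun ω => (∀ f ∈ X, epos ω f < epos ω e) ∧
          (∀ g ∈ Yu, epos ω e < epos ω g)))
        ∩ (Finset.univ.filter (fun ω => (∀ f ∈ X, epos ω f < epos ω e) ∧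
          (∀ g ∈ Yw, epos ω e < epos ω g))) := by
    ext ω
    simp only [Finset.mem_inter, Finset.mem_filter, Finset.mem_univ, true_and]
    constructor
    · rintro ⟨hC, hR⟩
      refine ⟨⟨hC, ?_⟩, hC, ?_⟩
      · intro g hg
        exact hR g (Finset.mem_erase.mpr ⟨Finset.ne_of_mem_erase hg,
          Finset.mem_union_left _ (Finset.mem_of_mem_erase hg)⟩)
      · intro g hg
        exact hR g (Finset.mem_erase.mpr ⟨Finset.ne_of_mem_erase hg,
          Finset.mem_union_right _ (Finset.mem_of_mem_erase hg)⟩)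
    · rintro ⟨⟨hC, hRu⟩, -, hRw⟩
      refine ⟨hC, ?_⟩
      intro g hg
      rcases Finset.mem_union.mp (Finset.mem_of_mem_erase hg) with h | h
      · exact hRu g (Finset.mem_erase.mpr ⟨Finset.ne_of_mem_erase hg, h⟩)
      · exact hRw g (Finset.mem_erase.mpr ⟨Finset.ne_of_mem_erase hg, h⟩)
  rw [hfe, hfi]
  exact Finset.card_union_add_card_inter _ _
end PerPi

section PerPi2
open Sum
variable {n : ℕ}

lemma cnt_pi (hn : 1 ≤ n) (π : Equiv.Perm (Fin n)) :
    (Finset.univ.filter (fun ω : Fin (completeBipartiteGraph (Fin n) (Fin n)).edgeFinset.card ≃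
        {f : Sym2 (Fin n ⊕ Fin n) // f ∈ (completeBipartiteGraph (Fin n) (Fin n)).edgeFinset} =>
      matchEdges n π ⊆ finalEdges 1 ω)).card
    = ∑ e ∈ matchEdges n π, (Finset.univ.filter (condE n π e)).card := by
  classical
  have hne : (matchEdges n π).Nonempty := Finset.card_pos.mp (by rw [matchEdges_card]; omega)
  have hbu : (Finset.univ.filter
      (fun ω : Fin (completeBipartiteGraph (Fin n) (Fin n)).edgeFinset.card ≃
        {f : Sym2 (Fin n ⊕ Fin n) // f ∈ (completeBipartiteGraph (Fin n) (Fin n)).edgeFinset} =>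
      matchEdges n π ⊆ finalEdges 1 ω))
      = (matchEdges n π).biUnion (fun e => Finset.univ.filter (condE n π e)) := by
    ext ω
    simp only [Finset.mem_filter, Finset.mem_univ, true_and, Finset.mem_biUnion]
    rw [event_iff (bip_cover hn) ω _ (matchEdges_subset π) hne (matchEdges_cover π)]
    unfold condE
    rfl
  rw [hbu, Finset.card_biUnion]
  intro e he e' he' hee
  simp only [Function.onFun]
  rw [Finset.disjoint_left]
  intro ω h1 h2
  rw [Finset.mem_filter] at h1 h2
  have hC : ∀ f ∈ (matchEdges n π).erase e, epos ω f < epos ω e := h1.2.1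
  have hC' : ∀ f ∈ (matchEdges n π).erase e', epos ω f < epos ω e' := h2.2.1
  have k1 := hC e' (Finset.mem_erase.mpr ⟨Ne.symm hee, he'⟩)
  have k2 := hC' e (Finset.mem_erase.mpr ⟨hee, he⟩)
  omega

lemma cntE_real (hn : 1 ≤ n) (π : Equiv.Perm (Fin n)) {e : Sym2 (Fin n ⊕ Fin n)}
    (he : e ∈ matchEdges n π) :
    ((Finset.univ.filter (condE n π e)).card : ℝ)
    = 2 * (((n - 1).factorial : ℝ) * ((n - 1).factorial : ℝ)
        * ((completeBipartiteGraph (Fin n) (Fin n)).edgeFinset.card.factorial : ℝ)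
        / ((2 * n - 1).factorial : ℝ))
      - ((n - 1).factorial : ℝ) * ((2 * n - 2).factorial : ℝ)
        * ((completeBipartiteGraph (Fin n) (Fin n)).edgeFinset.card.factorial : ℝ)
        / ((3 * n - 2).factorial : ℝ) := by
  obtain ⟨c1, c2, c3, h0, h1, h2, h3⟩ := cntE_eq hn π he
  have f1 : (((2 * n - 1).factorial : ℕ) : ℝ) ≠ 0 :=
    Nat.cast_ne_zero.mpr (Nat.factorial_ne_zero _)
  have f2 : (((3 * n - 2).factorial : ℕ) : ℝ) ≠ 0 :=
    Nat.cast_ne_zero.mpr (Nat.factorial_ne_zero _)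
  have r1 : (c1 : ℝ) = ((n - 1).factorial : ℝ) * ((n - 1).factorial : ℝ)
      * ((completeBipartiteGraph (Fin n) (Fin n)).edgeFinset.card.factorial : ℝ)
      / ((2 * n - 1).factorial : ℝ) := by
    rw [eq_div_iff f1]
    exact_mod_cast congrArg (Nat.cast : ℕ → ℝ) h1
  have r2 : (c2 : ℝ) = ((n - 1).factorial : ℝ) * ((n - 1).factorial : ℝ)
      * ((completeBipartiteGraph (Fin n) (Fin n)).edgeFinset.card.factorial : ℝ)
      / ((2 * n - 1).factorial : ℝ) := by
    rw [eq_div_iff f1]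
    exact_mod_cast congrArg (Nat.cast : ℕ → ℝ) h2
  have r3 : (c3 : ℝ) = ((n - 1).factorial : ℝ) * ((2 * n - 2).factorial : ℝ)
      * ((completeBipartiteGraph (Fin n) (Fin n)).edgeFinset.card.factorial : ℝ)
      / ((3 * n - 2).factorial : ℝ) := by
    rw [eq_div_iff f2]
    exact_mod_cast congrArg (Nat.cast : ℕ → ℝ) h3
  have h0' : ((Finset.univ.filter (condE n π e)).card : ℝ) + (c3 : ℝ) = (c1 : ℝ) + (c2 : ℝ) := by
    exact_mod_cast congrArg (Nat.cast : ℕ → ℝ) h0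
  rw [r1, r2] at h0'
  rw [← r3]
  linarith

lemma cnt_pi_real (hn : 1 ≤ n) (π : Equiv.Perm (Fin n)) :
    (((Finset.univ.filter
      (fun ω : Fin (completeBipartiteGraph (Fin n) (Fin n)).edgeFinset.card ≃
        {f : Sym2 (Fin n ⊕ Fin n) // f ∈ (completeBipartiteGraph (Fin n) (Fin n)).edgeFinset} =>
      matchEdges n π ⊆ finalEdges 1 ω)).card : ℕ) : ℝ)
    = (n : ℝ) * (2 * (((n - 1).factorial : ℝ) * ((n - 1).factorial : ℝ)
        * ((completeBipartiteGraph (Fin n) (Fin n)).edgeFinset.card.factorial : ℝ)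
        / ((2 * n - 1).factorial : ℝ))
      - ((n - 1).factorial : ℝ) * ((2 * n - 2).factorial : ℝ)
        * ((completeBipartiteGraph (Fin n) (Fin n)).edgeFinset.card.factorial : ℝ)
        / ((3 * n - 2).factorial : ℝ)) := by
  rw [cnt_pi hn π, Nat.cast_sum]
  rw [Finset.sum_congr rfl (fun e he => cntE_real hn π he), Finset.sum_const,
    matchEdges_card, nsmul_eq_mul]
end PerPi2


/-- Let `G = K_{n,n}`, `n ≥ 1`.  Form `G_ω` by listing the `n²` edges of `G` in a uniformly
random order and stopping as soon as every vertex has degree at least `1`.  The expected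
number of perfect matchings (1-regular spanning subgraphs) of `G` contained in `G_ω`
equals `n!·(2/C(2n−1,n) − 1/C(3n−2,n))`. -/
theorem expected_number_of_matchings_in_complete_bipartite (n : ℕ) (hn : 1 ≤ n) :
    (∑ ω : Fin (completeBipartiteGraph (Fin n) (Fin n)).edgeFinset.card ≃
        {e : Sym2 (Fin n ⊕ Fin n) // e ∈ (completeBipartiteGraph (Fin n) (Fin n)).edgeFinset},
        ({J : SimpleGraph (Fin n ⊕ Fin n) | J ≤ completeBipartiteGraph (Fin n) (Fin n) ∧
            regOfDegree J 1 ∧ J.edgeSet ⊆ ↑(finalEdges 1 ω)}.ncard : ℝ)) /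
      (Fintype.card (Fin (completeBipartiteGraph (Fin n) (Fin n)).edgeFinset.card ≃
        {e : Sym2 (Fin n ⊕ Fin n) //
          e ∈ (completeBipartiteGraph (Fin n) (Fin n)).edgeFinset}) : ℝ) =
    (n.factorial : ℝ) *
      (2 / ((2 * n - 1).choose n : ℝ) - 1 / ((3 * n - 2).choose n : ℝ)) := by
  classical
  -- rewrite each summand via permutations
  have hnum1 : ∀ ω : Fin (completeBipartiteGraph (Fin n) (Fin n)).edgeFinset.card ≃
      {e : Sym2 (Fin n ⊕ Fin n) // e ∈ (completeBipartiteGraph (Fin n) (Fin n)).edgeFinset},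
      ({J : SimpleGraph (Fin n ⊕ Fin n) | J ≤ completeBipartiteGraph (Fin n) (Fin n) ∧
          regOfDegree J 1 ∧ J.edgeSet ⊆ ↑(finalEdges 1 ω)}.ncard : ℝ)
      = (((Finset.univ.filter (fun π : Equiv.Perm (Fin n) =>
          matchEdges n π ⊆ finalEdges 1 ω)).card : ℕ) : ℝ) := by
    intro ω
    rw [matching_ncard_eq]
  rw [Finset.sum_congr rfl (fun ω _ => hnum1 ω)]
  rw [← Nat.cast_sum]
  have hswap : (∑ ω : Fin (completeBipartiteGraph (Fin n) (Fin n)).edgeFinset.card ≃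
      {e : Sym2 (Fin n ⊕ Fin n) // e ∈ (completeBipartiteGraph (Fin n) (Fin n)).edgeFinset},
      (Finset.univ.filter (fun π : Equiv.Perm (Fin n) =>
          matchEdges n π ⊆ finalEdges 1 ω)).card)
      = ∑ π : Equiv.Perm (Fin n),
        (Finset.univ.filter
          (fun ω : Fin (completeBipartiteGraph (Fin n) (Fin n)).edgeFinset.card ≃
            {e : Sym2 (Fin n ⊕ Fin n) //
              e ∈ (completeBipartiteGraph (Fin n) (Fin n)).edgeFinset} =>
          matchEdges n π ⊆ finalEdges 1 ω)).card := by
    simp only [Finset.card_filter]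
    exact Finset.sum_comm
  rw [hswap, Nat.cast_sum]
  rw [Finset.sum_congr rfl (fun π _ => cnt_pi_real hn π), Finset.sum_const,
    Finset.card_univ, Fintype.card_perm, Fintype.card_fin, nsmul_eq_mul]
  -- denominator
  rw [Fintype.card_equiv
    ((completeBipartiteGraph (Fin n) (Fin n)).edgeFinset.equivFin).symm, Fintype.card_fin]
  -- arithmetic
  have hch1 : (2 * n - 1).choose n * n.factorial * (n - 1).factorial
      = (2 * n - 1).factorial := by
    have h := Nat.choose_mul_factorial_mul_factorial (show n ≤ 2 * n - 1 by omega)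
    rwa [show 2 * n - 1 - n = n - 1 from by omega] at h
  have hch2 : (3 * n - 2).choose n * n.factorial * (2 * n - 2).factorial
      = (3 * n - 2).factorial := by
    have h := Nat.choose_mul_factorial_mul_factorial (show n ≤ 3 * n - 2 by omega)
    rwa [show 3 * n - 2 - n = 2 * n - 2 from by omega] at h
  have hch1R : (((2 * n - 1).factorial : ℕ) : ℝ)
      = (((2 * n - 1).choose n : ℕ) : ℝ) * (n.factorial : ℝ) * ((n - 1).factorial : ℝ) := by
    exact_mod_cast congrArg (Nat.cast : ℕ → ℝ) hch1.symm
  have hch2R : (((3 * n - 2).factorial : ℕ) : ℝ)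
      = (((3 * n - 2).choose n : ℕ) : ℝ) * (n.factorial : ℝ) * ((2 * n - 2).factorial : ℝ) := by
    exact_mod_cast congrArg (Nat.cast : ℕ → ℝ) hch2.symm
  rw [hch1R, hch2R]
  have hne1 : ((n.factorial : ℕ) : ℝ) ≠ 0 := Nat.cast_ne_zero.mpr (Nat.factorial_ne_zero _)
  have hne2 : (((n - 1).factorial : ℕ) : ℝ) ≠ 0 := Nat.cast_ne_zero.mpr (Nat.factorial_ne_zero _)
  have hne3 : (((2 * n - 2).factorial : ℕ) : ℝ) ≠ 0 :=
    Nat.cast_ne_zero.mpr (Nat.factorial_ne_zero _)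
  have hne4 : (((completeBipartiteGraph (Fin n) (Fin n)).edgeFinset.card.factorial : ℕ) : ℝ) ≠ 0 :=
    Nat.cast_ne_zero.mpr (Nat.factorial_ne_zero _)
  have hne5 : (((2 * n - 1).choose n : ℕ) : ℝ) ≠ 0 :=
    Nat.cast_ne_zero.mpr (Nat.pos_iff_ne_zero.mp (Nat.choose_pos (by omega)))
  have hne6 : (((3 * n - 2).choose n : ℕ) : ℝ) ≠ 0 :=
    Nat.cast_ne_zero.mpr (Nat.pos_iff_ne_zero.mp (Nat.choose_pos (by omega)))
  have hfacR : ((n.factorial : ℕ) : ℝ) = (n : ℝ) * (((n - 1).factorial : ℕ) : ℝ) := by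
    exact_mod_cast congrArg (Nat.cast : ℕ → ℝ) (Nat.mul_factorial_pred (by omega)).symm
  have hne0 : (n : ℝ) ≠ 0 := Nat.cast_ne_zero.mpr (by omega)
  rw [hfacR]
  field_simp
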